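/- Let T > 0, let α be a probability measure on the interval [−T, 0], and let z : ℝ → ℝ be a measurable function with z(t) = 0 for t < 0 which is square integrable on [0, T]. Then ∫₀ᵀ ∫_{[−T,0]} |z(t+u)|² α(du) dt ≤ ∫₀ᵀ |z(v)|² dv. -/

import Mathlib

open MeasureTheory
open scoped ENNReal

/-- For `T > 0`, a probability measure `α` on `[-T, 0]`, and a measurable
function `z : ℝ → ℝ` vanishing on negatives and square integrable on `[0, T]`, we have
`∫₀ᵀ ∫_{[-T,0]} |z(t+u)|² α(du) dt ≤ ∫₀ᵀ |z(v)|² dv`. -/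
theorem delay_estimate_basic
    (T : ℝ) (hT : 0 < T)
    (α : Measure ℝ) [IsProbabilityMeasure α] (hα : α (Set.Icc (-T) 0) = 1)
    (z : ℝ → ℝ) (hz : Measurable z) (hz0 : ∀ t < 0, z t = 0)
    (hzint : IntegrableOn (fun v => |z v| ^ 2) (Set.Icc 0 T)) :
    ∫ t in Set.Icc 0 T, (∫ u, |z (t + u)| ^ 2 ∂α)
      ≤ ∫ v in Set.Icc 0 T, |z v| ^ 2 := by
  set g : ℝ → ℝ := fun v => |z v| ^ 2 with hg
  have hgmeas : Measurable g := (hz.abs.pow_const 2)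
  have hgnn : ∀ v, 0 ≤ g v := fun v => by positivity
  have hg0 : ∀ v < 0, g v = 0 := fun v hv => by simp [hg, hz0 v hv]
  set G : ℝ → ℝ≥0∞ := fun v => ENNReal.ofReal (g v) with hG
  have hGmeas : Measurable G := ENNReal.measurable_ofReal.comp hgmeas
  have hG0 : ∀ v < 0, G v = 0 := fun v hv => by simp [hG, hg0 v hv]
  set C : ℝ≥0∞ := ∫⁻ v in Set.Icc 0 T, G v with hC
  -- C is finite
  have hCfin : C ≠ ⊤ := by
    have h1 := hzint.hasFiniteIntegral
    rw [HasFiniteIntegral] at h1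
    have heq : ∀ v, ‖g v‖ₑ = G v := fun v => by
      rw [hG, ← ofReal_norm_eq_enorm, Real.norm_of_nonneg (hgnn v)]
    simp_rw [heq] at h1
    exact h1.ne
  -- key estimate for fixed u ∈ [-T, 0]
  have hkey : ∀ u ∈ Set.Icc (-T) 0, ∫⁻ t in Set.Icc (0:ℝ) T, G (t + u) ≤ C := by
    intro u hu
    obtain ⟨hu1, hu2⟩ := hu
    have step1 : ∫⁻ t in Set.Icc (0:ℝ) T, G (t + u)
        = ∫⁻ v in Set.Icc u (T + u), G v := by
      rw [← lintegral_indicator measurableSet_Icc, ← lintegral_indicator measurableSet_Icc]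
      have : ∀ t : ℝ, (Set.Icc (0:ℝ) T).indicator (fun t => G (t + u)) t
          = (Set.Icc u (T + u)).indicator G (t + u) := by
        intro t
        by_cases ht : t ∈ Set.Icc (0:ℝ) T
        · rw [Set.indicator_of_mem ht, Set.indicator_of_mem]
          exact ⟨by linarith [ht.1], by linarith [ht.2]⟩
        · rw [Set.indicator_of_notMem ht, Set.indicator_of_notMem]
          intro hmem
          exact ht ⟨by linarith [hmem.1], by linarith [hmem.2]⟩
      simp_rw [this]
      exact lintegral_add_right_eq_self ((Set.Icc u (T + u)).indicator G) u
    rw [step1]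
    have step2 : ∫⁻ v in Set.Icc u (T + u), G v
        = ∫⁻ v in Set.Icc u (T + u), (Set.Icc (0:ℝ) T).indicator G v := by
      refine setLIntegral_congr_fun measurableSet_Icc ?_
      intro v hv
      by_cases hmem : v ∈ Set.Icc (0:ℝ) T
      · rw [Set.indicator_of_mem hmem]
      · rw [Set.indicator_of_notMem hmem]
        have hvneg : v < 0 := by
          by_contra hvpos
          push_neg at hvpos
          exact hmem ⟨hvpos, by linarith [hv.2]⟩
        exact hG0 v hvneg
    rw [step2]
    calc ∫⁻ v in Set.Icc u (T + u), (Set.Icc (0:ℝ) T).indicator G v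
        ≤ ∫⁻ v, (Set.Icc (0:ℝ) T).indicator G v :=
          setLIntegral_le_lintegral _ _
      _ = C := by rw [lintegral_indicator measurableSet_Icc]
  -- a.e. u lies in [-T, 0]
  have hae : ∀ᵐ u ∂α, u ∈ Set.Icc (-T) 0 := by
    rw [ae_iff]
    have : {u : ℝ | ¬ u ∈ Set.Icc (-T) 0} = (Set.Icc (-T) 0)ᶜ := rfl
    rw [this, measure_compl measurableSet_Icc (measure_ne_top α _), hα,
      measure_univ, tsub_self]
  -- Tonelli / swap
  have hprodmeas : Measurable (fun p : ℝ × ℝ => G (p.1 + p.2)) :=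
    hGmeas.comp (measurable_fst.add measurable_snd)
  have hswap : ∫⁻ t in Set.Icc (0:ℝ) T, ∫⁻ u, G (t + u) ∂α
      = ∫⁻ u, (∫⁻ t in Set.Icc (0:ℝ) T, G (t + u)) ∂α := by
    exact lintegral_lintegral_swap (μ := volume.restrict (Set.Icc 0 T)) (ν := α)
      (f := fun t u => G (t + u)) hprodmeas.aemeasurable
  have hmain : ∫⁻ t in Set.Icc (0:ℝ) T, ∫⁻ u, G (t + u) ∂α ≤ C := by
    rw [hswap]
    calc ∫⁻ u, (∫⁻ t in Set.Icc (0:ℝ) T, G (t + u)) ∂α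
        ≤ ∫⁻ _, C ∂α := lintegral_mono_ae (hae.mono fun u hu => hkey u hu)
      _ = C := by simp
  -- the inner real integral equals toReal of inner lintegral
  set L : ℝ → ℝ≥0∞ := fun t => ∫⁻ u, G (t + u) ∂α with hL
  have hLmeas : Measurable L := by
    apply Measurable.lintegral_prod_right (f := fun t u => G (t + u))
    exact hprodmeas
  have hinner : ∀ t, (∫ u, g (t + u) ∂α) = (L t).toReal := by
    intro t
    by_cases hfin : L t < ⊤
    · have hmeas' : Measurable fun u => g (t + u) :=
        hgmeas.comp (measurable_const.add measurable_id)
      rw [integral_eq_lintegral_of_nonneg_ae (ae_of_all _ fun u => hgnn (t + u))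
        hmeas'.aestronglyMeasurable]
    · push_neg at hfin
      rw [top_le_iff] at hfin
      have : ¬ Integrable (fun u => g (t + u)) α := by
        intro hint
        have h2 := hint.hasFiniteIntegral
        rw [HasFiniteIntegral] at h2
        have heq : ∀ u, ‖g (t + u)‖ₑ = G (t + u) := fun u => by
          rw [hG, ← ofReal_norm_eq_enorm, Real.norm_of_nonneg (hgnn _)]
        simp_rw [heq] at h2
        rw [hL] at hfin
        simp only at hfin
        rw [hfin] at h2
        exact absurd h2 (lt_irrefl _)
      rw [integral_undef this, hfin, ENNReal.toReal_top]
  -- RHS equals C.toReal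
  have hRHS : ∫ v in Set.Icc 0 T, g v = C.toReal := by
    rw [hC, integral_eq_lintegral_of_nonneg_ae (ae_of_all _ fun v => hgnn v)
      hgmeas.aestronglyMeasurable]
  -- conclude
  rw [hRHS]
  simp_rw [show (fun t => ∫ u, |z (t + u)| ^ 2 ∂α) = fun t => ∫ u, g (t + u) ∂α from rfl]
  simp_rw [hinner]
  by_cases hint : Integrable (fun t => (L t).toReal) ((volume : Measure ℝ).restrict (Set.Icc 0 T))
  · rw [integral_eq_lintegral_of_nonneg_ae (ae_of_all _ fun t => ENNReal.toReal_nonneg)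
      (hLmeas.ennreal_toReal).aestronglyMeasurable]
    apply ENNReal.toReal_mono hCfin
    calc ∫⁻ t in Set.Icc (0:ℝ) T, ENNReal.ofReal (L t).toReal
        ≤ ∫⁻ t in Set.Icc (0:ℝ) T, L t :=
          lintegral_mono fun t => ENNReal.ofReal_toReal_le
      _ ≤ C := hmain
  · rw [integral_undef hint]
    exact ENNReal.toReal_nonneg
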